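/- arXiv:2505.05468 — 2 statements merged into one kernel-verified Lean document; each statement's English description precedes it below -/
import Mathlib

section
/- Suppose V, W, Ṽ, W̃ are unitaries with ‖V − Ṽ‖ < Δ, ‖W − W̃‖ < Δ, ‖I − V‖ < δ, ‖I − W‖ < δ in operator norm. Then ‖VWV†W† − ṼW̃Ṽ†W̃†‖ < 8Δδ + 4Δδ² + 8Δ² + 4Δ³ + Δ⁴. -/
open Matrix
open scoped Matrix.Norms.L2Operator

section AuxAGC

variable {n : ℕ}

private lemma agc_norm_one_le : ‖(1 : Matrix (Fin n) (Fin n) ℂ)‖ ≤ 1 := by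
  rw [Matrix.cstar_norm_def, _root_.map_one]
  exact ContinuousLinearMap.norm_id_le

private lemma agc_unitary_norm_le (U : Matrix (Fin n) (Fin n) ℂ)
    (hU : U ∈ Matrix.unitaryGroup (Fin n) ℂ) : ‖U‖ ≤ 1 := by
  have h2 : Uᴴ * U = 1 := by
    simpa [Matrix.star_eq_conjTranspose] using hU.1
  have h3 := Matrix.l2_opNorm_conjTranspose_mul_self U
  rw [h2] at h3
  nlinarith [norm_nonneg U, agc_norm_one_le (n := n)]

private lemma agc_mul_lt {X Y : Matrix (Fin n) (Fin n) ℂ} {a b : ℝ}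
    (hX : ‖X‖ < a) (hY : ‖Y‖ < b) : ‖X * Y‖ < a * b := by
  have h := Matrix.l2_opNorm_mul X Y
  nlinarith [norm_nonneg X, norm_nonneg Y]

private lemma agc_mul_lt_left {X Y : Matrix (Fin n) (Fin n) ℂ} {c : ℝ}
    (hX : ‖X‖ ≤ 1) (hY : ‖Y‖ < c) : ‖X * Y‖ < c := by
  have h := Matrix.l2_opNorm_mul X Y
  nlinarith [norm_nonneg X, norm_nonneg Y]

private lemma agc_mul_lt_right {X Y : Matrix (Fin n) (Fin n) ℂ} {c : ℝ}
    (hX : ‖X‖ < c) (hY : ‖Y‖ ≤ 1) : ‖X * Y‖ < c := by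
  have h := Matrix.l2_opNorm_mul X Y
  nlinarith [norm_nonneg X, norm_nonneg Y]

private lemma agc_mul_le_one {X Y : Matrix (Fin n) (Fin n) ℂ}
    (hX : ‖X‖ ≤ 1) (hY : ‖Y‖ ≤ 1) : ‖X * Y‖ ≤ 1 := by
  have h := Matrix.l2_opNorm_mul X Y
  nlinarith [norm_nonneg X, norm_nonneg Y]

end AuxAGC

set_option maxHeartbeats 1600000 in
/-- **Approximating group commutators (Dawson–Nielsen).**
If `V, W, Ṽ, W̃` are unitaries with `‖V − Ṽ‖ < Δ`, `‖W − W̃‖ < Δ`, `‖1 − V‖ < δ`,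
`‖1 − W‖ < δ` in the operator norm, then
`‖VWV†W† − ṼW̃Ṽ†W̃†‖ < 8Δδ + 4Δδ² + 8Δ² + 4Δ³ + Δ⁴`. -/
theorem approx_group_commutator
    (n : ℕ) (V W V' W' : Matrix (Fin n) (Fin n) ℂ)
    (hV : V ∈ Matrix.unitaryGroup (Fin n) ℂ)
    (hW : W ∈ Matrix.unitaryGroup (Fin n) ℂ)
    (hV' : V' ∈ Matrix.unitaryGroup (Fin n) ℂ)
    (hW' : W' ∈ Matrix.unitaryGroup (Fin n) ℂ)
    (Δ δ : ℝ)
    (hVV : ‖V - V'‖ < Δ) (hWW : ‖W - W'‖ < Δ)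
    (hIV : ‖1 - V‖ < δ) (hIW : ‖1 - W‖ < δ) :
    ‖V * W * Vᴴ * Wᴴ - V' * W' * V'ᴴ * W'ᴴ‖
      < 8 * Δ * δ + 4 * Δ * δ ^ 2 + 8 * Δ ^ 2 + 4 * Δ ^ 3 + Δ ^ 4 := by
  have Δpos : 0 < Δ := lt_of_le_of_lt (norm_nonneg _) hVV
  have δpos : 0 < δ := lt_of_le_of_lt (norm_nonneg _) hIV
  have hA : ‖V' - V‖ < Δ := by rwa [norm_sub_rev] at hVV
  have hB : ‖W' - W‖ < Δ := by rwa [norm_sub_rev] at hWW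
  have hAh : ‖V'ᴴ - Vᴴ‖ < Δ := by
    rw [← Matrix.conjTranspose_sub, Matrix.l2_opNorm_conjTranspose]; exact hA
  have hBh : ‖W'ᴴ - Wᴴ‖ < Δ := by
    rw [← Matrix.conjTranspose_sub, Matrix.l2_opNorm_conjTranspose]; exact hB
  have hW1 : ‖W - 1‖ < δ := by rwa [norm_sub_rev] at hIW
  have hV1 : ‖V - 1‖ < δ := by rwa [norm_sub_rev] at hIV
  have hVh1 : ‖Vᴴ - 1‖ < δ := by
    have : Vᴴ - (1 : Matrix (Fin n) (Fin n) ℂ) = (V - 1)ᴴ := by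
      simp [Matrix.conjTranspose_sub]
    rw [this, Matrix.l2_opNorm_conjTranspose]; exact hV1
  have hWp1 : ‖W' - 1‖ < Δ + δ := by
    have h : W' - (1 : Matrix (Fin n) (Fin n) ℂ) = (W' - W) + (W - 1) := by abel
    rw [h]
    exact lt_of_le_of_lt (norm_add_le _ _) (add_lt_add hB hW1)
  have hVph1 : ‖V'ᴴ - 1‖ < Δ + δ := by
    have h0 : V'ᴴ - (1 : Matrix (Fin n) (Fin n) ℂ) = (V' - 1)ᴴ := by
      simp [Matrix.conjTranspose_sub]
    rw [h0, Matrix.l2_opNorm_conjTranspose]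
    have h : V' - (1 : Matrix (Fin n) (Fin n) ℂ) = (V' - V) + (V - 1) := by abel
    rw [h]
    exact lt_of_le_of_lt (norm_add_le _ _) (add_lt_add hA hV1)
  have nV : ‖V‖ ≤ 1 := agc_unitary_norm_le V hV
  have nW : ‖W‖ ≤ 1 := agc_unitary_norm_le W hW
  have nVph : ‖V'ᴴ‖ ≤ 1 := by
    rw [Matrix.l2_opNorm_conjTranspose]; exact agc_unitary_norm_le V' hV'
  have nWph : ‖W'ᴴ‖ ≤ 1 := by
    rw [Matrix.l2_opNorm_conjTranspose]; exact agc_unitary_norm_le W' hW'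
  have e1 : V' * V'ᴴ = 1 := by simpa [Matrix.star_eq_conjTranspose] using hV'.2
  have e2 : V * Vᴴ = 1 := by simpa [Matrix.star_eq_conjTranspose] using hV.2
  have e3 : W' * W'ᴴ = 1 := by simpa [Matrix.star_eq_conjTranspose] using hW'.2
  have e4 : W * Wᴴ = 1 := by simpa [Matrix.star_eq_conjTranspose] using hW.2
  have expand : V' * W' * V'ᴴ * W'ᴴ - V * W * Vᴴ * Wᴴ =
      (V' - V) * (W' - 1) * (V'ᴴ * W'ᴴ) + V * (W - 1) * ((V'ᴴ - Vᴴ) * W'ᴴ)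
        + V * (W' - W) * ((V'ᴴ - 1) * W'ᴴ) + V * W * ((Vᴴ - 1) * (W'ᴴ - Wᴴ))
        + ((V' * V'ᴴ - V * Vᴴ) * W'ᴴ + (V * (W' * W'ᴴ) - V * (W * Wᴴ))) := by
    noncomm_ring
  have key : V' * W' * V'ᴴ * W'ᴴ - V * W * Vᴴ * Wᴴ =
      (V' - V) * (W' - 1) * (V'ᴴ * W'ᴴ) + V * (W - 1) * ((V'ᴴ - Vᴴ) * W'ᴴ)
        + V * (W' - W) * ((V'ᴴ - 1) * W'ᴴ) + V * W * ((Vᴴ - 1) * (W'ᴴ - Wᴴ)) := by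
    rw [expand, e1, e2, e3, e4]
    simp
  have n1 : ‖(V' - V) * (W' - 1) * (V'ᴴ * W'ᴴ)‖ < Δ * (Δ + δ) :=
    agc_mul_lt_right (agc_mul_lt hA hWp1) (agc_mul_le_one nVph nWph)
  have n2 : ‖V * (W - 1) * ((V'ᴴ - Vᴴ) * W'ᴴ)‖ < δ * Δ :=
    agc_mul_lt (agc_mul_lt_left nV hW1) (agc_mul_lt_right hAh nWph)
  have n3 : ‖V * (W' - W) * ((V'ᴴ - 1) * W'ᴴ)‖ < Δ * (Δ + δ) :=
    agc_mul_lt (agc_mul_lt_left nV hB) (agc_mul_lt_right hVph1 nWph)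
  have n4 : ‖V * W * ((Vᴴ - 1) * (W'ᴴ - Wᴴ))‖ < δ * Δ :=
    agc_mul_lt_left (agc_mul_le_one nV nW) (agc_mul_lt hVh1 hBh)
  rw [norm_sub_rev, key]
  set t1 := (V' - V) * (W' - 1) * (V'ᴴ * W'ᴴ) with ht1
  set t2 := V * (W - 1) * ((V'ᴴ - Vᴴ) * W'ᴴ) with ht2
  set t3 := V * (W' - W) * ((V'ᴴ - 1) * W'ᴴ) with ht3
  set t4 := V * W * ((Vᴴ - 1) * (W'ᴴ - Wᴴ)) with ht4
  have s1 := norm_add_le (t1 + t2 + t3) t4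
  have s2 := norm_add_le (t1 + t2) t3
  have s3 := norm_add_le t1 t2
  have hp1 : 0 < Δ * δ := mul_pos Δpos δpos
  have hp2 : 0 < Δ * δ ^ 2 := mul_pos Δpos (pow_pos δpos 2)
  have hp3 : 0 < Δ ^ 2 := pow_pos Δpos 2
  have hp4 : 0 < Δ ^ 3 := pow_pos Δpos 3
  have hp5 : 0 < Δ ^ 4 := pow_pos Δpos 4
  nlinarith [n1, n2, n3, n4, s1, s2, s3]
end

section
/- Define the QSP unitary U(Φ, x) = e^{iφ₀σ_z} ∏_{j=1}^{k} (W(x) e^{iφ_j σ_z}) where W(x) = [[x, i√(1−x²)],[i√(1−x²), x]] and Φ = (φ₀, …, φ_k) ∈ ℝ^{k+1}. Then for every Φ and every x ∈ [−1,1], there exist polynomials P, Q ∈ ℂ[x] with deg P ≤ k, deg Q ≤ k−1, P of parity k mod 2, Q of parity (k−1) mod 2, satisfying |P(x)|² + (1−x²)|Q(x)|² = 1 for all x ∈ [−1,1], such that the top row of U(Φ, x) equals (P(x), iQ(x)√(1−x²)). -/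
open Matrix Polynomial

/-- The QSP signal unitary `W(x) = [[x, i√(1−x²)],[i√(1−x²), x]]`. -/
noncomputable def Wsig (x : ℝ) : Matrix (Fin 2) (Fin 2) ℂ :=
  !![(x : ℂ), Complex.I * (Real.sqrt (1 - x ^ 2) : ℂ);
     Complex.I * (Real.sqrt (1 - x ^ 2) : ℂ), (x : ℂ)]

/-- The phase unitary `e^{iφσ_z}`. -/
noncomputable def Rz (φ : ℝ) : Matrix (Fin 2) (Fin 2) ℂ :=
  !![Complex.exp (Complex.I * (φ : ℂ)), 0; 0, Complex.exp (-(Complex.I * (φ : ℂ)))]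

/-- The QSP unitary `U(Φ, x) = e^{iφ₀σ_z} ∏_{j=1}^{k} (W(x) e^{iφ_j σ_z})`. -/
noncomputable def qspU {k : ℕ} (Φ : Fin (k + 1) → ℝ) (x : ℝ) :
    Matrix (Fin 2) (Fin 2) ℂ :=
  Rz (Φ 0) * (List.ofFn (fun j : Fin k => Wsig x * Rz (Φ j.succ))).prod

lemma qspU_succ {k : ℕ} (Φ : Fin (k + 2) → ℝ) (x : ℝ) :
    qspU Φ x = Rz (Φ 0) * (Wsig x * qspU (fun i => Φ i.succ) x) := by
  simp only [qspU, List.ofFn_succ, List.prod_cons, Function.comp]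
  simp only [mul_assoc]

lemma eval_map_conj (p : Polynomial ℂ) (x : ℝ) :
    (p.map (starRingEnd ℂ)).eval (x : ℂ) = (starRingEnd ℂ) (p.eval (x : ℂ)) := by
  conv_lhs => rw [← Complex.conj_ofReal x]
  rw [eval_map, eval₂_hom]

lemma norm_key (a b : ℂ) (x : ℝ)
    (h : ‖a‖ ^ 2 + (1 - x ^ 2) * ‖b‖ ^ 2 = 1) :
    ‖(x:ℂ) * a - (1 - (x:ℂ) ^ 2) * (starRingEnd ℂ) b‖ ^ 2
      + (1 - x ^ 2) * ‖(x:ℂ) * b + (starRingEnd ℂ) a‖ ^ 2 = 1 := by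
  have hc : (1 - (x:ℂ) ^ 2) = ((1 - x ^ 2 : ℝ) : ℂ) := by push_cast; ring
  rw [hc]
  simp only [Complex.sq_norm] at h ⊢
  simp only [Complex.normSq_apply, Complex.mul_re, Complex.mul_im, Complex.sub_re,
    Complex.sub_im, Complex.add_re, Complex.add_im, Complex.ofReal_re, Complex.ofReal_im,
    Complex.conj_re, Complex.conj_im] at h ⊢
  ring_nf at h ⊢
  nlinarith [h, sq_nonneg x]

lemma coeff_X_mul' (p : Polynomial ℂ) (n : ℕ) :
    (X * p).coeff n = if 1 ≤ n then p.coeff (n - 1) else 0 := by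
  rw [← pow_one (X : Polynomial ℂ), (commute_X_pow p 1).eq, coeff_mul_X_pow']

lemma coeff_X_sq_mul (p : Polynomial ℂ) (n : ℕ) :
    (X ^ 2 * p).coeff n = if 2 ≤ n then p.coeff (n - 2) else 0 := by
  rw [(commute_X_pow p 2).eq, coeff_mul_X_pow']

theorem qsp_aux (k : ℕ) (Φ : Fin (k + 1) → ℝ) :
    ∃ P Q : Polynomial ℂ,
      P.degree ≤ k ∧ Q.degree < k ∧
      (∀ n : ℕ, P.coeff n ≠ 0 → n % 2 = k % 2) ∧
      (∀ n : ℕ, Q.coeff n ≠ 0 → n % 2 = (k + 1) % 2) ∧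
      (∀ x : ℝ, x ∈ Set.Icc (-1 : ℝ) 1 →
        ‖P.eval (x : ℂ)‖ ^ 2
          + (1 - x ^ 2) * ‖Q.eval (x : ℂ)‖ ^ 2 = 1) ∧
      (∀ x : ℝ, x ∈ Set.Icc (-1 : ℝ) 1 →
        qspU Φ x = !![P.eval (x : ℂ),
            Complex.I * Q.eval (x : ℂ) * (Real.sqrt (1 - x ^ 2) : ℂ);
            Complex.I * (Q.map (starRingEnd ℂ)).eval (x : ℂ) * (Real.sqrt (1 - x ^ 2) : ℂ),
            (P.map (starRingEnd ℂ)).eval (x : ℂ)]) := by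
  induction k with
  | zero =>
    refine ⟨C (Complex.exp (Complex.I * (Φ 0 : ℂ))), 0, degree_C_le, ?_, ?_, ?_, ?_, ?_⟩
    · simp only [degree_zero]; exact WithBot.bot_lt_coe 0
    · intro n hn
      by_contra h
      rw [coeff_C, if_neg (by omega)] at hn
      exact hn rfl
    · simp
    · intro x hx
      simp [Complex.norm_exp]
    · intro x hx
      have : qspU Φ x = Rz (Φ 0) := by
        simp [qspU]
      rw [this]
      ext i j
      fin_cases i <;> fin_cases j <;>
        simp [Rz, Polynomial.map_C, eval_C, ← Complex.exp_conj, _root_.map_mul,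
          Complex.conj_I, Complex.conj_ofReal]
  | succ k ih =>
    obtain ⟨P, Q, hPd, hQd, hPp, hQp, hnorm, hmat⟩ := ih (fun i => Φ i.succ)
    set e := Complex.exp (Complex.I * (Φ 0 : ℂ)) with he
    have he0 : e ≠ 0 := Complex.exp_ne_zero _
    have hce : (starRingEnd ℂ) e = Complex.exp (-(Complex.I * (Φ 0 : ℂ))) := by
      rw [he, ← Complex.exp_conj]
      congr 1
      simp only [_root_.map_mul, Complex.conj_I, Complex.conj_ofReal]
      ring
    have hPz : ∀ n : ℕ, k < n → P.coeff n = 0 := fun n hn =>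
      coeff_eq_zero_of_degree_lt (lt_of_le_of_lt hPd (by exact_mod_cast hn))
    have hQz : ∀ n : ℕ, k ≤ n → Q.coeff n = 0 := fun n hn =>
      coeff_eq_zero_of_degree_lt (lt_of_lt_of_le hQd (by exact_mod_cast hn))
    have hcP : ∀ n : ℕ, (C e * (X * P - (1 - X ^ 2) * Q.map (starRingEnd ℂ))).coeff n
        = e * ((if 1 ≤ n then P.coeff (n - 1) else 0)
            - (starRingEnd ℂ) (Q.coeff n)
            + (if 2 ≤ n then (starRingEnd ℂ) (Q.coeff (n - 2)) else 0)) := by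
      intro n
      have : (1 - X ^ 2 : Polynomial ℂ) * Q.map (starRingEnd ℂ)
          = Q.map (starRingEnd ℂ) - X ^ 2 * Q.map (starRingEnd ℂ) := by ring
      rw [coeff_C_mul, this, coeff_sub, coeff_sub, coeff_X_mul', coeff_X_sq_mul,
        coeff_map, coeff_map]
      ring
    have hcQ : ∀ n : ℕ, (C e * (X * Q + P.map (starRingEnd ℂ))).coeff n
        = e * ((if 1 ≤ n then Q.coeff (n - 1) else 0) + (starRingEnd ℂ) (P.coeff n)) := by
      intro n
      rw [coeff_C_mul, coeff_add, coeff_X_mul', coeff_map]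
    refine ⟨C e * (X * P - (1 - X ^ 2) * Q.map (starRingEnd ℂ)),
        C e * (X * Q + P.map (starRingEnd ℂ)), ?_, ?_, ?_, ?_, ?_, ?_⟩
    · rw [degree_le_iff_coeff_zero]
      intro m hm
      have hm' : k + 1 < m := by exact_mod_cast hm
      rw [hcP]
      rw [if_pos (by omega), if_pos (by omega), hPz _ (by omega), hQz _ (by omega),
        hQz _ (by omega)]
      simp
    · rw [degree_lt_iff_coeff_zero]
      intro m hm
      rw [hcQ]
      rw [if_pos (by omega), hQz _ (by omega), hPz _ (by omega)]
      simp
    · intro n hn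
      rw [hcP] at hn
      have h2 : (if 1 ≤ n then P.coeff (n - 1) else 0)
          - (starRingEnd ℂ) (Q.coeff n)
          + (if 2 ≤ n then (starRingEnd ℂ) (Q.coeff (n - 2)) else 0) ≠ 0 := by
        intro h; rw [h, mul_zero] at hn; exact hn rfl
      by_contra hpar
      apply h2
      have e1 : (if 1 ≤ n then P.coeff (n - 1) else 0) = 0 := by
        split
        · next h1 =>
            by_contra hc
            exact hpar (by have := hPp _ hc; omega)
        · rfl
      have e2 : Q.coeff n = 0 := by
        by_contra hc
        exact hpar (by have := hQp _ hc; omega)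
      have e3 : (if 2 ≤ n then (starRingEnd ℂ) (Q.coeff (n - 2)) else 0) = 0 := by
        split
        · next h1 =>
            have h4 : Q.coeff (n - 2) = 0 := by
              by_contra hc
              exact hpar (by have := hQp _ hc; omega)
            simp [h4]
        · rfl
      rw [e1, e2, e3]
      simp
    · intro n hn
      rw [hcQ] at hn
      have h2 : (if 1 ≤ n then Q.coeff (n - 1) else 0) + (starRingEnd ℂ) (P.coeff n) ≠ 0 := by
        intro h; rw [h, mul_zero] at hn; exact hn rfl
      by_contra hpar
      apply h2
      have e1 : (if 1 ≤ n then Q.coeff (n - 1) else 0) = 0 := by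
        split
        · next h1 =>
            by_contra hc
            exact hpar (by have := hQp _ hc; omega)
        · rfl
      have e2 : P.coeff n = 0 := by
        by_contra hc
        exact hpar (by have := hPp _ hc; omega)
      rw [e1, e2]
      simp
    · intro x hx
      have hev1 : (C e * (X * P - (1 - X ^ 2) * Q.map (starRingEnd ℂ))).eval (x : ℂ)
          = e * ((x:ℂ) * P.eval (x:ℂ) - (1 - (x:ℂ) ^ 2) * (starRingEnd ℂ) (Q.eval (x:ℂ))) := by
        simp [eval_map_conj]
      have hev2 : (C e * (X * Q + P.map (starRingEnd ℂ))).eval (x : ℂ)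
          = e * ((x:ℂ) * Q.eval (x:ℂ) + (starRingEnd ℂ) (P.eval (x:ℂ))) := by
        simp [eval_map_conj]
      have habse : ‖e‖ = 1 := by simp [he, Complex.norm_exp]
      rw [hev1, hev2, norm_mul, norm_mul, habse, one_mul, one_mul]
      exact norm_key _ _ x (hnorm x hx)
    · intro x hx
      rw [qspU_succ, hmat x hx]
      have hs2 : ((Real.sqrt (1 - x ^ 2) : ℝ) : ℂ) ^ 2 = 1 - (x:ℂ) ^ 2 := by
        rw [← Complex.ofReal_pow, Real.sq_sqrt (by nlinarith [hx.1, hx.2] : (0:ℝ) ≤ 1 - x ^ 2)]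
        push_cast; ring
      ext i j
      fin_cases i <;> fin_cases j <;>
        simp only [Rz, Wsig, Matrix.mul_apply, Fin.sum_univ_two, eval_map_conj, hce,
          _root_.map_mul, _root_.map_add, _root_.map_sub, _root_.map_one, map_pow,
          Complex.conj_conj, Complex.conj_ofReal, eval_mul, eval_add, eval_sub, eval_pow,
          eval_X, eval_C, eval_one, Matrix.cons_val', Matrix.cons_val_zero, Matrix.cons_val_one,
          Matrix.head_cons, Matrix.head_fin_const, Matrix.empty_val', Matrix.cons_val_fin_one,
          Fin.isValue, Fin.mk_zero, Fin.mk_one, Matrix.of_apply, Matrix.cons_val', Matrix.cons_val_zero, Matrix.cons_val_one, Matrix.head_cons] <;>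
        (try simp only [← he])
      · linear_combination (-((starRingEnd ℂ) (Q.eval (x:ℂ))) * e) * hs2
          + ((starRingEnd ℂ) (Q.eval (x:ℂ)) * e * ((Real.sqrt (1 - x ^ 2) : ℝ) : ℂ) ^ 2) * Complex.I_sq
      · ring
      · ring
      · linear_combination (-(Complex.exp (-(Complex.I * (Φ 0 : ℂ)))) * Q.eval (x:ℂ)) * hs2
          + (Complex.exp (-(Complex.I * (Φ 0 : ℂ))) * Q.eval (x:ℂ) * ((Real.sqrt (1 - x ^ 2) : ℝ) : ℂ) ^ 2) * Complex.I_sq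

/-- **Forward direction of the QSP structure theorem.**
For every phase list `Φ ∈ ℝ^{k+1}` there exist polynomials `P, Q ∈ ℂ[x]` with
`deg P ≤ k`, `deg Q ≤ k−1` (i.e. `deg Q < k`), `P` of parity `k mod 2`, `Q` of parity
`(k−1) mod 2`, satisfying `|P(x)|² + (1−x²)|Q(x)|² = 1` on `[−1,1]`, such that the top
row of `U(Φ, x)` equals `(P(x), iQ(x)√(1−x²))` for all `x ∈ [−1,1]`. -/
theorem qsp_forward (k : ℕ) (Φ : Fin (k + 1) → ℝ) :
    ∃ P Q : Polynomial ℂ,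
      P.degree ≤ k ∧ Q.degree < k ∧
      (∀ n : ℕ, P.coeff n ≠ 0 → n % 2 = k % 2) ∧
      (∀ n : ℕ, Q.coeff n ≠ 0 → n % 2 = (k + 1) % 2) ∧
      (∀ x : ℝ, x ∈ Set.Icc (-1 : ℝ) 1 →
        ‖P.eval (x : ℂ)‖ ^ 2
          + (1 - x ^ 2) * ‖Q.eval (x : ℂ)‖ ^ 2 = 1) ∧
      (∀ x : ℝ, x ∈ Set.Icc (-1 : ℝ) 1 →
        qspU Φ x 0 0 = P.eval (x : ℂ) ∧
        qspU Φ x 0 1 = Complex.I * Q.eval (x : ℂ) * (Real.sqrt (1 - x ^ 2) : ℂ)) := by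
  obtain ⟨P, Q, h1, h2, h3, h4, h5, h6⟩ := qsp_aux k Φ
  refine ⟨P, Q, h1, h2, h3, h4, h5, ?_⟩
  intro x hx
  rw [h6 x hx]
  constructor <;> simp
end
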